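/- Let G(z) be a Hermitian rational matrix polynomial G(z) = Σ_{p=0}^d z^p A_p + Σ_{j=1}^k w_j(z) E_j with all A_p, E_j Hermitian and (w_j(z))* = w_j(z̄), and let λ ∈ ℝ with all w_j(λ) defined. Then the Hermitian structured eigenvalue backward error equals the unstructured one: η^{Herm}(G,λ) = η(G,λ) = σ_min(G(λ)) / ‖(1, λ, …, λ^d, w₁(λ), …, w_k(λ))‖. -/

import Mathlib

open Matrix

/-- The spectral (operator 2-) norm of a complex matrix. -/
noncomputable def specNorm {n : ℕ} (A : Matrix (Fin n) (Fin n) ℂ) : ℝ :=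
  ‖Matrix.toEuclideanCLM (𝕜 := ℂ) A‖

/-- The Euclidean norm of a complex vector. -/
noncomputable def evNorm {n : ℕ} (v : Fin n → ℂ) : ℝ :=
  ‖(WithLp.equiv 2 (Fin n → ℂ)).symm v‖

/-- The smallest singular value of a complex matrix. -/
noncomputable def sigmaMin {n : ℕ} (A : Matrix (Fin n) (Fin n) ℂ) : ℝ :=
  sInf {r : ℝ | ∃ x : Fin n → ℂ, evNorm x = 1 ∧ r = evNorm (A.mulVec x)}

set_option synthInstance.maxHeartbeats 1000000
set_option maxHeartbeats 1000000

section BackwardErrorAux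
variable {n : ℕ}

lemma clm_apply (M : Matrix (Fin n) (Fin n) ℂ) (x : Fin n → ℂ) :
    Matrix.toEuclideanCLM (𝕜 := ℂ) M ((WithLp.equiv 2 (Fin n → ℂ)).symm x)
      = (WithLp.equiv 2 (Fin n → ℂ)).symm (M.mulVec x) := by
  exact Matrix.toEuclideanCLM_toLp M x

lemma clm_smul (c : ℂ) (M : Matrix (Fin n) (Fin n) ℂ) :
    Matrix.toEuclideanCLM (𝕜 := ℂ) (c • M) = c • Matrix.toEuclideanCLM (𝕜 := ℂ) M :=
  map_smul _ c M

lemma specNorm_smul (c : ℂ) (M : Matrix (Fin n) (Fin n) ℂ) :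
    specNorm (c • M) = ‖c‖ * specNorm M := by
  rw [specNorm, clm_smul, specNorm]; exact norm_smul c (Matrix.toEuclideanCLM (𝕜 := ℂ) M)

lemma evNorm_mulVec_le (M : Matrix (Fin n) (Fin n) ℂ) (x : Fin n → ℂ) :
    evNorm (M.mulVec x) ≤ specNorm M * evNorm x := by
  have := (Matrix.toEuclideanCLM (𝕜 := ℂ) M).le_opNorm ((WithLp.equiv 2 (Fin n → ℂ)).symm x)
  rwa [clm_apply] at this

lemma specNorm_nonneg (M : Matrix (Fin n) (Fin n) ℂ) : 0 ≤ specNorm M := norm_nonneg _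

lemma clm_sum {ι : Type*} (s : Finset ι) (f : ι → Matrix (Fin n) (Fin n) ℂ) :
    Matrix.toEuclideanCLM (𝕜 := ℂ) (∑ i ∈ s, f i)
      = ∑ i ∈ s, Matrix.toEuclideanCLM (𝕜 := ℂ) (f i) :=
  map_sum _ f s

/-- key bound: operator norm of the combined perturbation -/
lemma specNorm_add_le (M N : Matrix (Fin n) (Fin n) ℂ) :
    specNorm (M + N) ≤ specNorm M + specNorm N := by
  rw [specNorm, map_add]; exact norm_add_le _ _

lemma specNorm_sum_le {ι : Type*} (s : Finset ι) (f : ι → Matrix (Fin n) (Fin n) ℂ) :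
    specNorm (∑ i ∈ s, f i) ≤ ∑ i ∈ s, specNorm (f i) := by
  rw [specNorm, clm_sum]; exact norm_sum_le _ _

lemma specNorm_comb_le {m₁ m₂ : ℕ} (c : Fin m₁ → ℂ) (c' : Fin m₂ → ℂ)
    (M : Fin m₁ → Matrix (Fin n) (Fin n) ℂ) (M' : Fin m₂ → Matrix (Fin n) (Fin n) ℂ) :
    specNorm (∑ p, c p • M p + ∑ j, c' j • M' j)
      ≤ ∑ p, ‖c p‖ * specNorm (M p) + ∑ j, ‖c' j‖ * specNorm (M' j) := by
  refine le_trans (specNorm_add_le _ _) (add_le_add ?_ ?_) <;>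
  · refine le_trans (specNorm_sum_le _ _) ?_
    apply Finset.sum_le_sum
    intro i _
    exact le_of_eq (specNorm_smul _ _)

lemma outer_mulVec (x y : Fin n → ℂ) :
    (Matrix.of fun i j => x i * (starRingEnd ℂ) (x j)).mulVec y
      = (∑ j, (starRingEnd ℂ) (x j) * y j) • x := by
  funext i
  simp only [Matrix.mulVec, dotProduct, Matrix.of_apply, Pi.smul_apply, smul_eq_mul,
    Finset.sum_mul]
  exact Finset.sum_congr rfl fun j _ => by ring

lemma symm_apply (x : Fin n → ℂ) (i : Fin n) :
    ((WithLp.equiv 2 (Fin n → ℂ)).symm x) i = x i := rfl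

lemma inner_symm (x y : Fin n → ℂ) :
    (inner ℂ ((WithLp.equiv 2 (Fin n → ℂ)).symm x) ((WithLp.equiv 2 (Fin n → ℂ)).symm y) : ℂ)
      = ∑ j, (starRingEnd ℂ) (x j) * y j := by
  rw [PiLp.inner_apply]
  exact Finset.sum_congr rfl fun j _ => by rw [RCLike.inner_apply]; exact mul_comm _ _

lemma clm_outer_apply (x : Fin n → ℂ) (y : EuclideanSpace ℂ (Fin n)) :
    Matrix.toEuclideanCLM (𝕜 := ℂ) (Matrix.of fun i j => x i * (starRingEnd ℂ) (x j)) y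
      = (inner ℂ ((WithLp.equiv 2 (Fin n → ℂ)).symm x) y : ℂ)
          • (WithLp.equiv 2 (Fin n → ℂ)).symm x := by
  have hy : y = (WithLp.equiv 2 (Fin n → ℂ)).symm (WithLp.equiv 2 (Fin n → ℂ) y) := rfl
  rw [hy, clm_apply, outer_mulVec, (show ∀ (c : ℂ) (v : Fin n → ℂ), (WithLp.equiv 2 (Fin n → ℂ)).symm (c • v) = c • (WithLp.equiv 2 (Fin n → ℂ)).symm v from fun _ _ => rfl), inner_symm]

lemma inner_self_one {x : Fin n → ℂ} (hx : evNorm x = 1) :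
    (∑ j, (starRingEnd ℂ) (x j) * x j) = 1 := by
  rw [← inner_symm, inner_self_eq_norm_sq_to_K]
  rw [evNorm] at hx
  rw [hx]; norm_num

lemma specNorm_outer {x : Fin n → ℂ} (hx : evNorm x = 1) :
    specNorm (Matrix.of fun i j => x i * (starRingEnd ℂ) (x j)) = 1 := by
  set u : EuclideanSpace ℂ (Fin n) := (WithLp.equiv 2 (Fin n → ℂ)).symm x with hu
  have hun : ‖u‖ = 1 := hx
  apply le_antisymm
  · apply ContinuousLinearMap.opNorm_le_bound _ zero_le_one
    intro y
    rw [clm_outer_apply, norm_smul, ← hu, one_mul, hun, mul_one]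
    calc ‖(inner ℂ u y : ℂ)‖ ≤ ‖u‖ * ‖y‖ := norm_inner_le_norm u y
    _ = ‖y‖ := by rw [hun, one_mul]
  · have h := (Matrix.toEuclideanCLM (𝕜 := ℂ)
      (Matrix.of fun i j => x i * (starRingEnd ℂ) (x j))).le_opNorm u
    rw [clm_outer_apply, ← hu, norm_smul, inner_self_eq_norm_sq_to_K, hun] at h
    simpa [specNorm] using h

lemma outer_isHermitian (x : Fin n → ℂ) :
    (Matrix.of fun i j => x i * (starRingEnd ℂ) (x j)).IsHermitian := by
  ext i j
  simp [Matrix.conjTranspose_apply, mul_comm]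

lemma min_eig {G : Matrix (Fin n) (Fin n) ℂ} (hG : G.IsHermitian) (hn : 0 < n) :
    ∃ (x : Fin n → ℂ) (μ : ℝ), evNorm x = 1 ∧ G.mulVec x = (μ : ℂ) • x ∧
      ∀ y : Fin n → ℂ, |μ| * evNorm y ≤ evNorm (G.mulVec y) := by
  haveI : Nonempty (Fin n) := ⟨⟨0, hn⟩⟩
  obtain ⟨i₀, -, hmin⟩ := Finset.exists_min_image Finset.univ (fun i => |hG.eigenvalues i|)
    ⟨Classical.arbitrary _, Finset.mem_univ _⟩
  set b := hG.eigenvectorBasis with hb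
  set μ := hG.eigenvalues with hμ
  have hbT : ∀ i, Matrix.toEuclideanCLM (𝕜 := ℂ) G (b i) = (μ i : ℂ) • b i := by
    intro i
    have h1 := hG.mulVec_eigenvectorBasis i
    have h2 : Matrix.toEuclideanCLM (𝕜 := ℂ) G (b i)
        = (WithLp.equiv 2 (Fin n → ℂ)).symm (G.mulVec ((WithLp.equiv 2 (Fin n → ℂ)) (b i))) := by
      rw [← clm_apply]; rfl
    rw [h2]
    have h3 : (WithLp.equiv 2 (Fin n → ℂ)) (b i) = ⇑(b i) := rfl
    rw [h3, h1, RCLike.real_smul_eq_coe_smul (K := ℂ)]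
    rfl
  refine ⟨⇑(b i₀), μ i₀, ?_, ?_, ?_⟩
  · have : (WithLp.equiv 2 (Fin n → ℂ)).symm ⇑(b i₀) = b i₀ := rfl
    rw [evNorm, this]
    exact b.orthonormal.1 i₀
  · have h1 := hG.mulVec_eigenvectorBasis i₀
    rw [h1, RCLike.real_smul_eq_coe_smul (K := ℂ)]
    rfl
  · intro y
    set u : EuclideanSpace ℂ (Fin n) := (WithLp.equiv 2 (Fin n → ℂ)).symm y with hu
    set T := Matrix.toEuclideanCLM (𝕜 := ℂ) G with hT
    have hTy : evNorm (G.mulVec y) = ‖T u‖ := by rw [evNorm, hT, hu, clm_apply]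
    have hEy : evNorm y = ‖u‖ := rfl
    rw [hTy, hEy]
    have hsym := Matrix.isHermitian_iff_isSymmetric.mp hG
    have hrepr : ∀ i, b.repr (T u) i = (μ i : ℂ) * b.repr u i := by
      intro i
      rw [b.repr_apply_apply, b.repr_apply_apply]
      have hco : T u = Matrix.toEuclideanLin G u := rfl
      have hco2 : Matrix.toEuclideanLin G (b i) = T (b i) := rfl
      calc (inner ℂ (b i) (T u) : ℂ) = inner ℂ (Matrix.toEuclideanLin G (b i)) u := by
            rw [hco]; exact (hsym (b i) u).symm
      _ = inner ℂ ((μ i : ℂ) • b i) u := by rw [hco2, hbT i]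
      _ = (μ i : ℂ) * inner ℂ (b i) u := by
            rw [inner_smul_left, Complex.conj_ofReal]
    have hnorm2 : ∀ z : EuclideanSpace ℂ (Fin n), ‖z‖ ^ 2 = ∑ i, ‖b.repr z i‖ ^ 2 := by
      intro z
      rw [← b.repr.norm_map z, EuclideanSpace.norm_eq, Real.sq_sqrt (by positivity)]
    have key : (|μ i₀| * ‖u‖) ^ 2 ≤ ‖T u‖ ^ 2 := by
      rw [mul_pow, hnorm2 u, hnorm2 (T u), Finset.mul_sum]
      apply Finset.sum_le_sum
      intro i _
      rw [hrepr i, norm_mul, mul_pow]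
      have h4 : ‖((μ i : ℝ) : ℂ)‖ = |μ i| := by
        rw [Complex.norm_real, Real.norm_eq_abs]
      rw [h4]
      have := hmin i (Finset.mem_univ i)
      have h5 : |μ i₀| ^ 2 ≤ |μ i| ^ 2 := by
        apply pow_le_pow_left₀ (abs_nonneg _) this 2
      nlinarith [sq_nonneg (‖b.repr u i‖), abs_nonneg (μ i₀), norm_nonneg (b.repr u i)]
    have h6 : 0 ≤ |μ i₀| * ‖u‖ := by positivity
    exact (pow_le_pow_iff_left₀ h6 (norm_nonneg _) (by norm_num)).mp key

lemma evNorm_smul (c : ℂ) (v : Fin n → ℂ) : evNorm (c • v) = ‖c‖ * evNorm v := by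
  rw [evNorm, (show ∀ (c : ℂ) (v : Fin n → ℂ), (WithLp.equiv 2 (Fin n → ℂ)).symm (c • v) = c • (WithLp.equiv 2 (Fin n → ℂ)).symm v from fun _ _ => rfl)]
  exact norm_smul c _

lemma evNorm_nonneg (v : Fin n → ℂ) : 0 ≤ evNorm v := norm_nonneg _

lemma evNorm_pos {v : Fin n → ℂ} (hv : v ≠ 0) : 0 < evNorm v := by
  rw [evNorm]
  rw [norm_pos_iff]
  intro h
  exact hv ((WithLp.equiv 2 (Fin n → ℂ)).symm.injective (by rw [h, (show (WithLp.equiv 2 (Fin n → ℂ)).symm 0 = 0 from rfl)]))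

lemma isHermitian_real_smul (c : ℝ) {M : Matrix (Fin n) (Fin n) ℂ} (h : M.IsHermitian) :
    ((c : ℂ) • M).IsHermitian := by
  rw [Matrix.IsHermitian, Matrix.conjTranspose_smul, h.eq]
  congr 1
  exact Complex.conj_ofReal c

lemma isHermitian_finsum {ι : Type*} (s : Finset ι) (f : ι → Matrix (Fin n) (Fin n) ℂ)
    (h : ∀ i ∈ s, (f i).IsHermitian) : (∑ i ∈ s, f i).IsHermitian := by
  rw [Matrix.IsHermitian, Matrix.conjTranspose_sum]
  exact Finset.sum_congr rfl h

lemma cs_bound {m₁ m₂ : ℕ} (a b : Fin m₁ → ℝ) (a' b' : Fin m₂ → ℝ)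
    (hab : ∀ p, 0 ≤ a p * b p) (hab' : ∀ j, 0 ≤ a' j * b' j) :
    ∑ p, a p * b p + ∑ j, a' j * b' j
      ≤ Real.sqrt (∑ p, a p ^ 2 + ∑ j, a' j ^ 2) * Real.sqrt (∑ p, b p ^ 2 + ∑ j, b' j ^ 2) := by
  set f : Fin m₁ ⊕ Fin m₂ → ℝ := Sum.elim a a' with hf
  set g : Fin m₁ ⊕ Fin m₂ → ℝ := Sum.elim b b' with hg
  have h1 : ∑ p, a p * b p + ∑ j, a' j * b' j = ∑ i, f i * g i := by
    rw [Fintype.sum_sum_type]; rfl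
  have h2 : ∑ p, a p ^ 2 + ∑ j, a' j ^ 2 = ∑ i, f i ^ 2 := by
    rw [Fintype.sum_sum_type]; rfl
  have h3 : ∑ p, b p ^ 2 + ∑ j, b' j ^ 2 = ∑ i, g i ^ 2 := by
    rw [Fintype.sum_sum_type]; rfl
  rw [h1, h2, h3]
  have hcs := Finset.sum_mul_sq_le_sq_mul_sq Finset.univ f g
  have hnn : 0 ≤ ∑ i, f i * g i := by
    apply Finset.sum_nonneg
    rintro (p | j) _
    · exact hab p
    · exact hab' j
  calc ∑ i, f i * g i = Real.sqrt ((∑ i, f i * g i) ^ 2) := (Real.sqrt_sq hnn).symm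
  _ ≤ Real.sqrt ((∑ i, f i ^ 2) * ∑ i, g i ^ 2) := Real.sqrt_le_sqrt hcs
  _ = _ := Real.sqrt_mul (Finset.sum_nonneg fun i _ => sq_nonneg _) _

end BackwardErrorAux

/-- For a Hermitian rational matrix polynomial evaluated at a real point `λ`
(so that the values `wⱼ(λ)` are real), the Hermitian structured eigenvalue backward
error equals the unstructured one, which equals
`σ_min(G(λ)) / ‖(1,λ,…,λ^d,w₁(λ),…,w_k(λ))‖`. -/
theorem hermitian_structured_backward_error_eq_unstructured_real {n d k : ℕ}
    (A : Fin (d + 1) → Matrix (Fin n) (Fin n) ℂ)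
    (E : Fin k → Matrix (Fin n) (Fin n) ℂ)
    (hA : ∀ p, (A p).IsHermitian) (hE : ∀ j, (E j).IsHermitian)
    (lam : ℝ) (w : Fin k → ℝ) :
    sInf {r : ℝ |
        ∃ (ΔA : Fin (d + 1) → Matrix (Fin n) (Fin n) ℂ)
          (ΔE : Fin k → Matrix (Fin n) (Fin n) ℂ),
          (∀ p, (ΔA p).IsHermitian) ∧ (∀ j, (ΔE j).IsHermitian) ∧
          (∑ p : Fin (d + 1), (lam : ℂ) ^ (p : ℕ) • (A p - ΔA p)
              + ∑ j, (w j : ℂ) • (E j - ΔE j)).det = 0 ∧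
          r = Real.sqrt (∑ p : Fin (d + 1), specNorm (ΔA p) ^ 2
              + ∑ j, specNorm (ΔE j) ^ 2)} =
      sInf {r : ℝ |
        ∃ (ΔA : Fin (d + 1) → Matrix (Fin n) (Fin n) ℂ)
          (ΔE : Fin k → Matrix (Fin n) (Fin n) ℂ),
          (∑ p : Fin (d + 1), (lam : ℂ) ^ (p : ℕ) • (A p - ΔA p)
              + ∑ j, (w j : ℂ) • (E j - ΔE j)).det = 0 ∧
          r = Real.sqrt (∑ p : Fin (d + 1), specNorm (ΔA p) ^ 2
              + ∑ j, specNorm (ΔE j) ^ 2)} ∧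
    sInf {r : ℝ |
        ∃ (ΔA : Fin (d + 1) → Matrix (Fin n) (Fin n) ℂ)
          (ΔE : Fin k → Matrix (Fin n) (Fin n) ℂ),
          (∑ p : Fin (d + 1), (lam : ℂ) ^ (p : ℕ) • (A p - ΔA p)
              + ∑ j, (w j : ℂ) • (E j - ΔE j)).det = 0 ∧
          r = Real.sqrt (∑ p : Fin (d + 1), specNorm (ΔA p) ^ 2
              + ∑ j, specNorm (ΔE j) ^ 2)} =
      sigmaMin (∑ p : Fin (d + 1), (lam : ℂ) ^ (p : ℕ) • A p + ∑ j, (w j : ℂ) • E j) /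
        Real.sqrt (∑ p : Fin (d + 1), (|lam| ^ (p : ℕ)) ^ 2 + ∑ j, |w j| ^ 2) := by
  classical
  by_cases hn : n = 0
  · subst hn
    have e1 : {r : ℝ |
        ∃ (ΔA : Fin (d + 1) → Matrix (Fin 0) (Fin 0) ℂ)
          (ΔE : Fin k → Matrix (Fin 0) (Fin 0) ℂ),
          (∀ p, (ΔA p).IsHermitian) ∧ (∀ j, (ΔE j).IsHermitian) ∧
          (∑ p : Fin (d + 1), (lam : ℂ) ^ (p : ℕ) • (A p - ΔA p)
              + ∑ j, (w j : ℂ) • (E j - ΔE j)).det = 0 ∧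
          r = Real.sqrt (∑ p : Fin (d + 1), specNorm (ΔA p) ^ 2
              + ∑ j, specNorm (ΔE j) ^ 2)} = (∅ : Set ℝ) := by
      ext r
      simp only [Set.mem_setOf_eq, Set.mem_empty_iff_false, iff_false]
      rintro ⟨ΔA, ΔE, -, -, h0, -⟩
      rw [Matrix.det_isEmpty] at h0
      exact one_ne_zero h0
    have e2 : {r : ℝ |
        ∃ (ΔA : Fin (d + 1) → Matrix (Fin 0) (Fin 0) ℂ)
          (ΔE : Fin k → Matrix (Fin 0) (Fin 0) ℂ),
          (∑ p : Fin (d + 1), (lam : ℂ) ^ (p : ℕ) • (A p - ΔA p)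
              + ∑ j, (w j : ℂ) • (E j - ΔE j)).det = 0 ∧
          r = Real.sqrt (∑ p : Fin (d + 1), specNorm (ΔA p) ^ 2
              + ∑ j, specNorm (ΔE j) ^ 2)} = (∅ : Set ℝ) := by
      ext r
      simp only [Set.mem_setOf_eq, Set.mem_empty_iff_false, iff_false]
      rintro ⟨ΔA, ΔE, h0, -⟩
      rw [Matrix.det_isEmpty] at h0
      exact one_ne_zero h0
    have e3 : ∀ M : Matrix (Fin 0) (Fin 0) ℂ, sigmaMin M = 0 := by
      intro M
      unfold sigmaMin
      convert Real.sInf_empty using 2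
      ext r
      simp only [Set.mem_setOf_eq, Set.mem_empty_iff_false, iff_false]
      rintro ⟨x, hx, -⟩
      have : evNorm x = 0 := by
        rw [evNorm, EuclideanSpace.norm_eq]
        simp
      rw [this] at hx
      exact zero_ne_one hx
    rw [e1, e2, e3, zero_div, Real.sInf_empty]
    exact ⟨rfl, rfl⟩
  · have hn' : 0 < n := Nat.pos_of_ne_zero hn
    set G := ∑ p : Fin (d + 1), (lam : ℂ) ^ (p : ℕ) • A p + ∑ j, (w j : ℂ) • E j with hGdef
    have hGH : G.IsHermitian := by
      rw [hGdef]
      apply Matrix.IsHermitian.add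
      · apply isHermitian_finsum
        intro p _
        have := isHermitian_real_smul (lam ^ (p : ℕ)) (hA p)
        rwa [Complex.ofReal_pow] at this
      · exact isHermitian_finsum _ _ fun j _ => isHermitian_real_smul (w j) (hE j)
    obtain ⟨x, μ, hx1, hGx, hmin⟩ := min_eig hGH hn'
    set P := Matrix.of fun i j => x i * (starRingEnd ℂ) (x j) with hPdef
    set S2 := (∑ p : Fin (d + 1), (lam ^ (p : ℕ)) ^ 2 + ∑ j, (w j) ^ 2 : ℝ) with hS2
    have hS2pos : 0 < S2 := by
      have h0 : (1 : ℝ) ≤ ∑ p : Fin (d + 1), (lam ^ (p : ℕ)) ^ 2 := by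
        have := Finset.single_le_sum (f := fun p : Fin (d + 1) => (lam ^ (p : ℕ)) ^ 2)
          (fun i _ => sq_nonneg _) (Finset.mem_univ (0 : Fin (d + 1)))
        simpa using this
      have h1 : (0 : ℝ) ≤ ∑ j, (w j) ^ 2 := Finset.sum_nonneg fun j _ => sq_nonneg _
      rw [hS2]; linarith
    have hdenom : (∑ p : Fin (d + 1), (|lam| ^ (p : ℕ)) ^ 2 + ∑ j, |w j| ^ 2) = S2 := by
      rw [hS2]
      congr 1
      · exact Finset.sum_congr rfl fun p _ => by rw [← abs_pow, sq_abs]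
      · exact Finset.sum_congr rfl fun j _ => by rw [sq_abs]
    have hxne : x ≠ 0 := by
      intro h
      have h2 : evNorm (0 : Fin n → ℂ) = 0 := by
        rw [evNorm, (show (WithLp.equiv 2 (Fin n → ℂ)).symm 0 = 0 from rfl), norm_zero]
      rw [h, h2] at hx1
      exact zero_ne_one hx1
    have hPx : P.mulVec x = x := by
      rw [hPdef, outer_mulVec, inner_self_one hx1, one_smul]
    have hPherm : P.IsHermitian := outer_isHermitian x
    have hPnorm : specNorm P = 1 := specNorm_outer hx1
    set v := |μ| / Real.sqrt S2 with hv
    -- the chosen Hermitian perturbations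
    set ΔA₀ : Fin (d + 1) → Matrix (Fin n) (Fin n) ℂ :=
      fun p => ((lam ^ (p : ℕ) * μ / S2 : ℝ) : ℂ) • P with hΔA₀
    set ΔE₀ : Fin k → Matrix (Fin n) (Fin n) ℂ :=
      fun j => ((w j * μ / S2 : ℝ) : ℂ) • P with hΔE₀
    have hDsum : ∑ p : Fin (d + 1), (lam : ℂ) ^ (p : ℕ) • ΔA₀ p + ∑ j, (w j : ℂ) • ΔE₀ j
        = (μ : ℂ) • P := by
      rw [hΔA₀, hΔE₀]
      simp only [smul_smul]
      rw [← Finset.sum_smul, ← Finset.sum_smul, ← add_smul]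
      congr 1
      have e1 : ∀ p : Fin (d + 1),
          (lam : ℂ) ^ (p : ℕ) * ((lam ^ (p : ℕ) * μ / S2 : ℝ) : ℂ)
            = (((lam ^ (p : ℕ)) ^ 2 * (μ / S2) : ℝ) : ℂ) := by
        intro p; push_cast; ring
      have e2 : ∀ j : Fin k,
          ((w j : ℝ) : ℂ) * ((w j * μ / S2 : ℝ) : ℂ) = (((w j) ^ 2 * (μ / S2) : ℝ) : ℂ) := by
        intro j; push_cast; ring
      rw [Finset.sum_congr rfl fun p _ => e1 p, Finset.sum_congr rfl fun j _ => e2 j]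
      rw [← Complex.ofReal_sum, ← Complex.ofReal_sum, ← Complex.ofReal_add, Complex.ofReal_inj]
      rw [← Finset.sum_mul, ← Finset.sum_mul, ← add_mul, ← hS2]
      field_simp
    have hsplit : ∀ (ΔA : Fin (d + 1) → Matrix (Fin n) (Fin n) ℂ)
        (ΔE : Fin k → Matrix (Fin n) (Fin n) ℂ),
        (∑ p : Fin (d + 1), (lam : ℂ) ^ (p : ℕ) • (A p - ΔA p)
            + ∑ j, (w j : ℂ) • (E j - ΔE j))
          = G - (∑ p : Fin (d + 1), (lam : ℂ) ^ (p : ℕ) • ΔA p + ∑ j, (w j : ℂ) • ΔE j) := by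
      intro ΔA ΔE
      simp only [smul_sub, Finset.sum_sub_distrib]
      rw [hGdef]
      abel
    have hmem : v ∈ {r : ℝ |
        ∃ (ΔA : Fin (d + 1) → Matrix (Fin n) (Fin n) ℂ)
          (ΔE : Fin k → Matrix (Fin n) (Fin n) ℂ),
          (∀ p, (ΔA p).IsHermitian) ∧ (∀ j, (ΔE j).IsHermitian) ∧
          (∑ p : Fin (d + 1), (lam : ℂ) ^ (p : ℕ) • (A p - ΔA p)
              + ∑ j, (w j : ℂ) • (E j - ΔE j)).det = 0 ∧
          r = Real.sqrt (∑ p : Fin (d + 1), specNorm (ΔA p) ^ 2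
              + ∑ j, specNorm (ΔE j) ^ 2)} := by
      refine ⟨ΔA₀, ΔE₀, fun p => isHermitian_real_smul _ hPherm,
        fun j => isHermitian_real_smul _ hPherm, ?_, ?_⟩
      · rw [hsplit, hDsum]
        apply Matrix.exists_mulVec_eq_zero_iff.mp
        refine ⟨x, hxne, ?_⟩
        rw [Matrix.sub_mulVec, hGx, Matrix.smul_mulVec, hPx, sub_self]
      · have hspec : ∀ r : ℝ, specNorm ((r : ℂ) • P) = |r| := by
          intro r
          rw [specNorm_smul, hPnorm, mul_one, Complex.norm_real, Real.norm_eq_abs]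
        have hin : (∑ p : Fin (d + 1), specNorm (ΔA₀ p) ^ 2 + ∑ j, specNorm (ΔE₀ j) ^ 2)
            = μ ^ 2 / S2 := by
          rw [hΔA₀, hΔE₀]
          simp only [hspec, sq_abs]
          have e1 : ∀ p : Fin (d + 1), (lam ^ (p : ℕ) * μ / S2) ^ 2
              = (lam ^ (p : ℕ)) ^ 2 * (μ / S2) ^ 2 := fun p => by ring
          have e2 : ∀ j : Fin k, (w j * μ / S2) ^ 2 = (w j) ^ 2 * (μ / S2) ^ 2 := fun j => by ring
          rw [Finset.sum_congr rfl fun p _ => e1 p, Finset.sum_congr rfl fun j _ => e2 j,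
            ← Finset.sum_mul, ← Finset.sum_mul, ← add_mul, ← hS2]
          field_simp
        rw [hin, Real.sqrt_div (sq_nonneg μ), Real.sqrt_sq_eq_abs, hv]
    have hlb : ∀ r ∈ {r : ℝ |
        ∃ (ΔA : Fin (d + 1) → Matrix (Fin n) (Fin n) ℂ)
          (ΔE : Fin k → Matrix (Fin n) (Fin n) ℂ),
          (∑ p : Fin (d + 1), (lam : ℂ) ^ (p : ℕ) • (A p - ΔA p)
              + ∑ j, (w j : ℂ) • (E j - ΔE j)).det = 0 ∧
          r = Real.sqrt (∑ p : Fin (d + 1), specNorm (ΔA p) ^ 2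
              + ∑ j, specNorm (ΔE j) ^ 2)}, v ≤ r := by
      rintro r ⟨ΔA, ΔE, hdet, rfl⟩
      rw [hsplit] at hdet
      obtain ⟨y, hy0, hyker⟩ := Matrix.exists_mulVec_eq_zero_iff.mpr hdet
      set D := ∑ p : Fin (d + 1), (lam : ℂ) ^ (p : ℕ) • ΔA p + ∑ j, (w j : ℂ) • ΔE j with hDdef
      have hGy : G.mulVec y = D.mulVec y := by
        rw [Matrix.sub_mulVec] at hyker
        exact sub_eq_zero.mp hyker
      have hty : 0 < evNorm y := evNorm_pos hy0
      set Nv := ∑ p : Fin (d + 1), specNorm (ΔA p) ^ 2 + ∑ j, specNorm (ΔE j) ^ 2 with hNv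
      have c1 : |μ| * evNorm y ≤ evNorm (D.mulVec y) := by
        rw [← hGy]; exact hmin y
      have c2 : evNorm (D.mulVec y) ≤ specNorm D * evNorm y := evNorm_mulVec_le _ _
      have c3 : specNorm D
          ≤ ∑ p : Fin (d + 1), |lam| ^ (p : ℕ) * specNorm (ΔA p)
            + ∑ j, |w j| * specNorm (ΔE j) := by
        refine le_trans (specNorm_comb_le _ _ _ _) (le_of_eq ?_)
        congr 1
        · refine Finset.sum_congr rfl fun p _ => ?_
          rw [norm_pow, Complex.norm_real, Real.norm_eq_abs]
        · refine Finset.sum_congr rfl fun j _ => ?_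
          rw [Complex.norm_real, Real.norm_eq_abs]
      have c4 : ∑ p : Fin (d + 1), |lam| ^ (p : ℕ) * specNorm (ΔA p)
            + ∑ j, |w j| * specNorm (ΔE j)
          ≤ Real.sqrt (∑ p : Fin (d + 1), (|lam| ^ (p : ℕ)) ^ 2 + ∑ j, |w j| ^ 2)
            * Real.sqrt Nv := by
        rw [hNv]
        exact cs_bound _ _ _ _
          (fun p => mul_nonneg (by positivity) (specNorm_nonneg _))
          (fun j => mul_nonneg (abs_nonneg _) (specNorm_nonneg _))
      rw [hdenom] at c4
      have key : |μ| ≤ Real.sqrt S2 * Real.sqrt Nv := by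
        have h5 : |μ| * evNorm y ≤ Real.sqrt S2 * Real.sqrt Nv * evNorm y :=
          le_trans c1 (le_trans c2
            (mul_le_mul_of_nonneg_right (le_trans c3 c4) (evNorm_nonneg _)))
        exact le_of_mul_le_mul_right h5 hty
      rw [hv, div_le_iff₀ (Real.sqrt_pos.mpr hS2pos)]
      calc |μ| ≤ Real.sqrt S2 * Real.sqrt Nv := key
      _ = Real.sqrt Nv * Real.sqrt S2 := mul_comm _ _
    have hsig : sigmaMin G = |μ| := by
      unfold sigmaMin
      apply le_antisymm
      · apply csInf_le
        · refine ⟨0, ?_⟩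
          rintro r ⟨x', hx', rfl⟩
          exact evNorm_nonneg _
        · refine ⟨x, hx1, ?_⟩
          rw [hGx, evNorm_smul, hx1, mul_one, Complex.norm_real, Real.norm_eq_abs]
      · apply le_csInf
        · refine ⟨|μ|, x, hx1, ?_⟩
          rw [hGx, evNorm_smul, hx1, mul_one, Complex.norm_real, Real.norm_eq_abs]
        · rintro r ⟨x', hx', rfl⟩
          have := hmin x'
          rwa [hx', mul_one] at this
    have hsub : {r : ℝ |
        ∃ (ΔA : Fin (d + 1) → Matrix (Fin n) (Fin n) ℂ)
          (ΔE : Fin k → Matrix (Fin n) (Fin n) ℂ),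
          (∀ p, (ΔA p).IsHermitian) ∧ (∀ j, (ΔE j).IsHermitian) ∧
          (∑ p : Fin (d + 1), (lam : ℂ) ^ (p : ℕ) • (A p - ΔA p)
              + ∑ j, (w j : ℂ) • (E j - ΔE j)).det = 0 ∧
          r = Real.sqrt (∑ p : Fin (d + 1), specNorm (ΔA p) ^ 2
              + ∑ j, specNorm (ΔE j) ^ 2)} ⊆ {r : ℝ |
        ∃ (ΔA : Fin (d + 1) → Matrix (Fin n) (Fin n) ℂ)
          (ΔE : Fin k → Matrix (Fin n) (Fin n) ℂ),
          (∑ p : Fin (d + 1), (lam : ℂ) ^ (p : ℕ) • (A p - ΔA p)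
              + ∑ j, (w j : ℂ) • (E j - ΔE j)).det = 0 ∧
          r = Real.sqrt (∑ p : Fin (d + 1), specNorm (ΔA p) ^ 2
              + ∑ j, specNorm (ΔE j) ^ 2)} := by
      rintro r ⟨ΔA, ΔE, -, -, h3, h4⟩
      exact ⟨ΔA, ΔE, h3, h4⟩
    have hmem' := hsub hmem
    have hstr_eq : sInf {r : ℝ |
        ∃ (ΔA : Fin (d + 1) → Matrix (Fin n) (Fin n) ℂ)
          (ΔE : Fin k → Matrix (Fin n) (Fin n) ℂ),
          (∀ p, (ΔA p).IsHermitian) ∧ (∀ j, (ΔE j).IsHermitian) ∧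
          (∑ p : Fin (d + 1), (lam : ℂ) ^ (p : ℕ) • (A p - ΔA p)
              + ∑ j, (w j : ℂ) • (E j - ΔE j)).det = 0 ∧
          r = Real.sqrt (∑ p : Fin (d + 1), specNorm (ΔA p) ^ 2
              + ∑ j, specNorm (ΔE j) ^ 2)} = v := by
      apply le_antisymm
      · exact csInf_le ⟨v, fun r hr => hlb r (hsub hr)⟩ hmem
      · exact le_csInf ⟨v, hmem⟩ fun r hr => hlb r (hsub hr)
    have huns_eq : sInf {r : ℝ |
        ∃ (ΔA : Fin (d + 1) → Matrix (Fin n) (Fin n) ℂ)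
          (ΔE : Fin k → Matrix (Fin n) (Fin n) ℂ),
          (∑ p : Fin (d + 1), (lam : ℂ) ^ (p : ℕ) • (A p - ΔA p)
              + ∑ j, (w j : ℂ) • (E j - ΔE j)).det = 0 ∧
          r = Real.sqrt (∑ p : Fin (d + 1), specNorm (ΔA p) ^ 2
              + ∑ j, specNorm (ΔE j) ^ 2)} = v := by
      apply le_antisymm
      · exact csInf_le ⟨v, hlb⟩ hmem'
      · exact le_csInf ⟨v, hmem'⟩ hlb
    refine ⟨hstr_eq.trans huns_eq.symm, ?_⟩
    rw [huns_eq, hsig, hdenom]
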